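/- There exists a universal constant C > 0 such that: for every σ > 0, every α ∈ (0, 1/2], every real random variable X with mean μ that is σ-sub-Gaussian, and every event A with P(A) ≥ 1 − α (in particular P(A) > 0), one has | E[X · 1_A] / P(A) − μ | ≤ C σ α √(log(1/α)). -/

import Mathlib

open MeasureTheory ProbabilityTheory

/-- A real random variable `X` is `σ`-sub-Gaussian with mean `μ` under `P`:
it is measurable, integrable with mean `μ`, and its centered moment generating
function satisfies `E[exp (l (X - μ))] ≤ exp (l² σ² / 2)` for all `l ∈ ℝ`. -/
def IsSubGaussianRV {Ω : Type*} [MeasurableSpace Ω] (P : Measure Ω)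
    (X : Ω → ℝ) (μ σ : ℝ) : Prop :=
  Measurable X ∧ Integrable X P ∧ (∫ ω, X ω ∂P) = μ ∧
    ∀ l : ℝ, Integrable (fun ω => Real.exp (l * (X ω - μ))) P ∧
      (∫ ω, Real.exp (l * (X ω - μ)) ∂P) ≤ Real.exp (l ^ 2 * σ ^ 2 / 2)

private lemma ptwise_bound (l t y : ℝ) (hl : 0 < l) :
    |y| ≤ t + Real.exp (-(l * t)) * (Real.exp (l * y) + Real.exp (-(l * y))) / l := by
  have key : Real.exp (l * |y|) ≤ Real.exp (l * y) + Real.exp (-(l * y)) := by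
    rcases abs_cases y with ⟨h, _⟩ | ⟨h, _⟩
    · rw [h]; exact le_add_of_nonneg_right (Real.exp_pos _).le
    · rw [h, mul_neg, ← neg_mul, neg_mul]
      exact le_add_of_nonneg_left (Real.exp_pos _).le
  have h2 : l * (|y| - t) ≤ Real.exp (l * (|y| - t)) := by
    have := Real.add_one_le_exp (l * (|y| - t)); linarith
  have h3 : Real.exp (l * (|y| - t)) = Real.exp (-(l * t)) * Real.exp (l * |y|) := by
    rw [← Real.exp_add]; ring_nf
  have h4 : Real.exp (l * (|y| - t))
      ≤ Real.exp (-(l * t)) * (Real.exp (l * y) + Real.exp (-(l * y))) := by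
    rw [h3]; exact mul_le_mul_of_nonneg_left key (Real.exp_pos _).le
  have h5 : l * (|y| - t) ≤ Real.exp (-(l * t)) * (Real.exp (l * y) + Real.exp (-(l * y))) :=
    h2.trans h4
  rw [← sub_le_iff_le_add', le_div_iff₀ hl, mul_comm]
  exact h5

set_option maxHeartbeats 2000000 in
/-- **Resilience of sub-Gaussian distributions.** There is a universal constant
`C > 0` such that for every `σ`-sub-Gaussian random variable `X` with mean `μ` and
every event `A` with `P(A) ≥ 1 − α` (with `α ∈ (0, 1/2]`, so in particular `P(A) > 0`),
the conditional mean satisfies `|E[X | A] − μ| ≤ C σ α √(log (1/α))`. -/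
theorem subGaussian_resilience :
    ∃ C : ℝ, 0 < C ∧
      ∀ (Ω : Type) (_ : MeasurableSpace Ω) (P : Measure Ω), IsProbabilityMeasure P →
      ∀ (σ α μ : ℝ), 0 < σ → 0 < α → α ≤ 1 / 2 →
      ∀ X : Ω → ℝ, IsSubGaussianRV P X μ σ →
      ∀ A : Set Ω, MeasurableSet A → ENNReal.ofReal (1 - α) ≤ P A →
        |(∫ ω in A, X ω ∂P) / (P A).toReal - μ|
          ≤ C * σ * α * Real.sqrt (Real.log (1 / α)) := by
  refine ⟨8, by norm_num, ?_⟩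
  intro Ω mΩ P hP σ α μ hσ hα hα2 X hX A hA hPA
  obtain ⟨hXm, hXi, hXmean, hmgf⟩ := hX
  have hα1 : α < 1 := lt_of_le_of_lt hα2 (by norm_num)
  set L : ℝ := Real.log (1 / α) with hLdef
  have hlog2 : (0.6931 : ℝ) < Real.log 2 := by
    have := Real.log_two_gt_d9; linarith
  have hL2 : Real.log 2 ≤ L := by
    apply Real.log_le_log (by norm_num)
    rw [le_div_iff₀ hα]; linarith
  have hLpos : 0 < L := lt_of_lt_of_le (by linarith) hL2
  set r : ℝ := Real.sqrt L with hrdef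
  have hr : 0 < r := Real.sqrt_pos.mpr hLpos
  have hr2 : r ^ 2 = L := Real.sq_sqrt hLpos.le
  set s : ℝ := Real.sqrt (2 * L) with hsdef
  have hs : 0 < s := Real.sqrt_pos.mpr (by linarith)
  have hs2 : s ^ 2 = 2 * L := Real.sq_sqrt (by linarith)
  have hseq : s = Real.sqrt 2 * r := by
    rw [hsdef, hrdef, Real.sqrt_mul (by norm_num : (0:ℝ) ≤ 2)]
  set t : ℝ := σ * s with htdef
  set l : ℝ := s / σ with hldef
  have hl : 0 < l := div_pos hs hσ
  have hlt : l * t = 2 * L := by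
    rw [hldef, htdef]
    field_simp
    linear_combination hs2
  have hlL : l ^ 2 * σ ^ 2 / 2 = L := by
    rw [hldef]
    field_simp
    linear_combination hs2
  have hexpL : Real.exp L = 1 / α := by
    rw [hLdef]; exact Real.exp_log (by positivity)
  have hexpnegL : Real.exp (-L) = α := by
    rw [Real.exp_neg, hexpL]; field_simp
  -- the centered variable
  set Y : Ω → ℝ := fun ω => X ω - μ with hYdef
  have hYi : Integrable Y P := hXi.sub (integrable_const μ)
  have hYmean : ∫ ω, Y ω ∂P = 0 := by
    simp only [hYdef]
    rw [integral_sub hXi (integrable_const μ), hXmean, integral_const]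
    simp
  have hEp : Integrable (fun ω => Real.exp (l * Y ω)) P := (hmgf l).1
  have hEm : Integrable (fun ω => Real.exp (-(l * Y ω))) P := by
    have := (hmgf (-l)).1
    simpa [neg_mul] using this
  have hEpbound : ∫ ω, Real.exp (l * Y ω) ∂P ≤ Real.exp L := by
    have := (hmgf l).2
    rwa [hlL] at this
  have hEmbound : ∫ ω, Real.exp (-(l * Y ω)) ∂P ≤ Real.exp L := by
    have := (hmgf (-l)).2
    rw [show (-l) ^ 2 * σ ^ 2 / 2 = l ^ 2 * σ ^ 2 / 2 by ring, hlL] at this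
    simpa [neg_mul] using this
  -- measure of A and its complement
  have hPAfin : P A ≠ ⊤ := measure_ne_top P A
  set pA : ℝ := (P A).toReal with hpAdef
  have hpA_ge : 1 - α ≤ pA := by
    have h := ENNReal.toReal_mono hPAfin hPA
    rwa [ENNReal.toReal_ofReal (by linarith)] at h
  have hpA_pos : 0 < pA := by linarith
  have hpA_half : 1 / 2 ≤ pA := by linarith
  have hPAc : (P Aᶜ).toReal ≤ α := by
    have h1 : P Aᶜ = 1 - P A := prob_compl_eq_one_sub hA
    have h2 : (P Aᶜ).toReal = 1 - pA := by
      rw [h1, ENNReal.toReal_sub_of_le prob_le_one ENNReal.one_ne_top, ENNReal.toReal_one]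
    linarith [h2.le, h2.ge]
  -- rewrite the conditional bias
  have hIA : ∫ ω in A, Y ω ∂P = (∫ ω in A, X ω ∂P) - pA * μ := by
    simp only [hYdef]
    rw [integral_sub hXi.integrableOn (integrable_const μ).integrableOn, setIntegral_const,
      smul_eq_mul, measureReal_def]
  have key1 : (∫ ω in A, X ω ∂P) / pA - μ = (∫ ω in A, Y ω ∂P) / pA := by
    rw [hIA]; field_simp
  have hsplit : ∫ ω in A, Y ω ∂P = - ∫ ω in Aᶜ, Y ω ∂P := by
    have h := integral_add_compl hA hYi
    rw [hYmean] at h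
    linarith
  have key2 : |∫ ω in Aᶜ, Y ω ∂P| ≤ ∫ ω in Aᶜ, |Y ω| ∂P := by
    simpa [Real.norm_eq_abs] using norm_integral_le_integral_norm (μ := P.restrict Aᶜ) Y
  -- pointwise domination and integration
  set g : Ω → ℝ := fun ω =>
    t + Real.exp (-(l * t)) * (Real.exp (l * Y ω) + Real.exp (-(l * Y ω))) / l with hgdef
  have hgi : Integrable g P := by
    apply (integrable_const t).add
    exact ((hEp.add hEm).const_mul _).div_const _
  have key3 : ∫ ω in Aᶜ, |Y ω| ∂P ≤ ∫ ω in Aᶜ, g ω ∂P :=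
    setIntegral_mono hYi.abs.integrableOn hgi.integrableOn
      (fun ω => ptwise_bound l t (Y ω) hl)
  have key4 : ∫ ω in Aᶜ, g ω ∂P = t * (P Aᶜ).toReal
      + Real.exp (-(l * t)) *
        (∫ ω in Aᶜ, (Real.exp (l * Y ω) + Real.exp (-(l * Y ω))) ∂P) / l := by
    have hI2 : IntegrableOn
        (fun ω => Real.exp (-(l * t)) * (Real.exp (l * Y ω) + Real.exp (-(l * Y ω))) / l)
        Aᶜ P := (((hEp.add hEm).const_mul _).div_const _).integrableOn
    simp only [hgdef]
    rw [integral_add (integrable_const t).integrableOn hI2, setIntegral_const,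
      smul_eq_mul, integral_div, integral_const_mul, measureReal_def]
    ring
  have key5 : ∫ ω in Aᶜ, (Real.exp (l * Y ω) + Real.exp (-(l * Y ω))) ∂P
      ≤ ∫ ω, (Real.exp (l * Y ω) + Real.exp (-(l * Y ω))) ∂P :=
    setIntegral_le_integral (hEp.add hEm) (ae_of_all _ (fun ω => by positivity))
  have key6 : ∫ ω, (Real.exp (l * Y ω) + Real.exp (-(l * Y ω))) ∂P ≤ 2 * Real.exp L := by
    rw [integral_add hEp hEm]
    linarith [hEpbound, hEmbound]
  have key7 : ∫ ω in Aᶜ, |Y ω| ∂P ≤ t * α + Real.exp (-(l * t)) * (2 * Real.exp L) / l := by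
    refine key3.trans ?_
    rw [key4]
    have ht0 : 0 ≤ t := by rw [htdef]; positivity
    apply add_le_add
    · exact mul_le_mul_of_nonneg_left hPAc ht0
    · apply (div_le_div_iff_of_pos_right hl).mpr
      exact mul_le_mul_of_nonneg_left (key5.trans key6) (Real.exp_pos _).le
  have key8 : t * α + Real.exp (-(l * t)) * (2 * Real.exp L) / l = σ * s * α + 2 * α * σ / s := by
    have h1 : Real.exp (-(l * t)) * (2 * Real.exp L) = 2 * α := by
      rw [hlt, show Real.exp (-(2 * L)) * (2 * Real.exp L)
          = 2 * (Real.exp (-(2 * L)) * Real.exp L) from by ring, ← Real.exp_add,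
        show -(2 * L) + L = -L from by ring, hexpnegL]
    rw [h1, htdef, hldef]
    field_simp
  -- numeric estimate
  have h14 : (1.414 : ℝ) ≤ Real.sqrt 2 := by
    rw [show (1.414 : ℝ) = Real.sqrt (1.414 ^ 2) from (Real.sqrt_sq (by norm_num)).symm]
    exact Real.sqrt_le_sqrt (by norm_num)
  have hrs : 2 * L + 2 ≤ 4 * (r * s) := by
    have hrse : r * s = Real.sqrt 2 * L := by
      rw [hseq]; linear_combination Real.sqrt 2 * hr2
    rw [hrse]
    have h : 1.414 * L ≤ Real.sqrt 2 * L := mul_le_mul_of_nonneg_right h14 hLpos.le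
    linarith
  have hnum : σ * s * α + 2 * α * σ / s ≤ 4 * σ * α * r := by
    have key : s + 2 / s ≤ 4 * r := by
      rw [← sub_nonneg]
      have heq : 4 * r - (s + 2 / s) = (4 * (r * s) - (s ^ 2 + 2)) / s := by
        field_simp
      rw [heq]
      refine div_nonneg ?_ hs.le
      linarith [hrs, hs2]
    calc σ * s * α + 2 * α * σ / s = σ * α * (s + 2 / s) := by field_simp
      _ ≤ σ * α * (4 * r) := mul_le_mul_of_nonneg_left key (by positivity)
      _ = 4 * σ * α * r := by ring
  -- put everything together
  have hfin : |∫ ω in A, Y ω ∂P| ≤ 4 * σ * α * r := by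
    rw [hsplit, abs_neg]
    calc |∫ ω in Aᶜ, Y ω ∂P| ≤ ∫ ω in Aᶜ, |Y ω| ∂P := key2
      _ ≤ t * α + Real.exp (-(l * t)) * (2 * Real.exp L) / l := key7
      _ = σ * s * α + 2 * α * σ / s := key8
      _ ≤ 4 * σ * α * r := hnum
  rw [key1, abs_div, abs_of_pos hpA_pos]
  calc |∫ ω in A, Y ω ∂P| / pA ≤ (4 * σ * α * r) / (1 / 2) :=
        div_le_div₀ (by positivity) hfin (by norm_num) hpA_half
    _ = 8 * σ * α * r := by ring
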